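/- Let b ≥ 8 and let F = F_{−1,b}. Then (−(b+2)/5, (2b−1)/5) is a fixed point of F lying in Q₂, and the sets X = {(−b, 1), (b−2, −1), (b−2, 2b−3)} and Q = {((2−b)/3, −1), ((b−2)/3, (2b−1)/3), (−(b+4)/3, (2b−1)/3)} are periodic orbits of F of minimal period 3, with F mapping each listed point to the next one and the last listed point to the first in each set. -/
import Mathlib


/-- The piecewise linear map `F_{a,b}(x,y) = (|x| - y + a, x - |y| + b)`. -/
noncomputable def F (a b : ℝ) : ℝ × ℝ → ℝ × ℝ :=
  fun p => (|p.1| - p.2 + a, p.1 - |p.2| + b)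

/-- The closed second quadrant. -/
def Q2 : Set (ℝ × ℝ) := {p | p.1 ≤ 0 ∧ 0 ≤ p.2}

/-- `S` is a periodic orbit of `f` of minimal period `n`: it is the (finite) orbit
`{p, f p, …, f^[n-1] p}` of some periodic point `p` of minimal period `n`. -/
def IsPeriodicOrbit (f : ℝ × ℝ → ℝ × ℝ) (n : ℕ) (S : Set (ℝ × ℝ)) : Prop :=
  ∃ p : ℝ × ℝ, Function.minimalPeriod f p = n ∧ 0 < n ∧
    S = (fun k : ℕ => f^[k] p) '' Set.Iio n

lemma orbit3 (f : ℝ × ℝ → ℝ × ℝ) (p q r : ℝ × ℝ) (h1 : f p = q) (h2 : f q = r)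
    (h3 : f r = p) (hpq : p ≠ q) : IsPeriodicOrbit f 3 {p, q, r} := by
  refine ⟨p, ?_, by norm_num, ?_⟩
  · have hper : Function.IsPeriodicPt f 3 p := by
      show f^[3] p = p
      simp [Function.iterate_succ_apply, h1, h2, h3]
    have hdvd := hper.minimalPeriod_dvd
    have := (Nat.prime_three).eq_one_or_self_of_dvd _ hdvd
    rcases this with h | h
    · exfalso
      have := Function.minimalPeriod_eq_one_iff_isFixedPt.1 h
      exact hpq ((this.eq).symm.trans h1)
    · exact h
  · have : Set.Iio (3 : ℕ) = {0, 1, 2} := by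
      ext k; simp [Set.mem_Iio]; omega
    rw [this]
    simp [Set.image_insert_eq, Function.iterate_succ_apply, h1, h2]

theorem case_b_ge_eight (b : ℝ) (hb : 8 ≤ b) :
    F (-1) b (-(b+2)/5, (2*b-1)/5) = (-(b+2)/5, (2*b-1)/5) ∧
    (-(b+2)/5, (2*b-1)/5) ∈ Q2 ∧
    (IsPeriodicOrbit (F (-1) b) 3 {(-b, 1), (b-2, -1), (b-2, 2*b-3)} ∧
      F (-1) b (-b, 1) = (b-2, -1) ∧
      F (-1) b (b-2, -1) = (b-2, 2*b-3) ∧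
      F (-1) b (b-2, 2*b-3) = (-b, 1)) ∧
    (IsPeriodicOrbit (F (-1) b) 3
        {((2-b)/3, -1), ((b-2)/3, (2*b-1)/3), (-(b+4)/3, (2*b-1)/3)} ∧
      F (-1) b ((2-b)/3, -1) = ((b-2)/3, (2*b-1)/3) ∧
      F (-1) b ((b-2)/3, (2*b-1)/3) = (-(b+4)/3, (2*b-1)/3) ∧
      F (-1) b (-(b+4)/3, (2*b-1)/3) = ((2-b)/3, -1)) := by
  have efix : F (-1) b (-(b+2)/5, (2*b-1)/5) = (-(b+2)/5, (2*b-1)/5) := by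
    simp only [F]
    rw [abs_of_nonpos (by linarith : -(b+2)/5 ≤ 0),
        abs_of_nonneg (by linarith : (0:ℝ) ≤ (2*b-1)/5)]
    exact Prod.ext (by dsimp; ring) (by dsimp; ring)
  have e1 : F (-1) b (-b, 1) = (b-2, -1) := by
    simp only [F]
    rw [abs_of_nonpos (by linarith : -b ≤ (0:ℝ)), abs_of_nonneg (by norm_num : (0:ℝ) ≤ (1:ℝ))]
    exact Prod.ext (by dsimp; ring) (by dsimp; ring)
  have e2 : F (-1) b (b-2, -1) = (b-2, 2*b-3) := by
    simp only [F]
    rw [abs_of_nonneg (by linarith : (0:ℝ) ≤ b-2), abs_of_nonpos (by norm_num : (-1:ℝ) ≤ 0)]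
    exact Prod.ext (by dsimp; ring) (by dsimp; ring)
  have e3 : F (-1) b (b-2, 2*b-3) = (-b, 1) := by
    simp only [F]
    rw [abs_of_nonneg (by linarith : (0:ℝ) ≤ b-2), abs_of_nonneg (by linarith : (0:ℝ) ≤ 2*b-3)]
    exact Prod.ext (by dsimp; ring) (by dsimp; ring)
  have f1 : F (-1) b ((2-b)/3, -1) = ((b-2)/3, (2*b-1)/3) := by
    simp only [F]
    rw [abs_of_nonpos (by linarith : (2-b)/3 ≤ 0), abs_of_nonpos (by norm_num : (-1:ℝ) ≤ 0)]
    exact Prod.ext (by dsimp; ring) (by dsimp; ring)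
  have f2 : F (-1) b ((b-2)/3, (2*b-1)/3) = (-(b+4)/3, (2*b-1)/3) := by
    simp only [F]
    rw [abs_of_nonneg (by linarith : (0:ℝ) ≤ (b-2)/3),
        abs_of_nonneg (by linarith : (0:ℝ) ≤ (2*b-1)/3)]
    exact Prod.ext (by dsimp; ring) (by dsimp; ring)
  have f3 : F (-1) b (-(b+4)/3, (2*b-1)/3) = ((2-b)/3, -1) := by
    simp only [F]
    rw [abs_of_nonpos (by linarith : -(b+4)/3 ≤ 0),
        abs_of_nonneg (by linarith : (0:ℝ) ≤ (2*b-1)/3)]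
    exact Prod.ext (by dsimp; ring) (by dsimp; ring)
  refine ⟨efix, ⟨by dsimp; linarith, by dsimp; linarith⟩, ⟨?_, e1, e2, e3⟩, ⟨?_, f1, f2, f3⟩⟩
  · exact orbit3 _ _ _ _ e1 e2 e3 (by simp [Prod.ext_iff]; intro h; linarith)
  · exact orbit3 _ _ _ _ f1 f2 f3 (by simp [Prod.ext_iff]; intro h; linarith)
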